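/- For every formula ξ ∈ L_NF, if G ⊢ ξ then HilbP ⊢ pari(ξ), where pari : L_Full → L_Par replaces demonic operations by duals of angelic ones. -/
import Mathlib


/-! Normal-form game logic: syntax -/

mutual
inductive GLForm : Type where
  | atom  : ℕ → GLForm
  | natom : ℕ → GLForm
  | or    : GLForm → GLForm → GLForm
  | and   : GLForm → GLForm → GLForm
  | dia   : GLGame → GLForm → GLForm
inductive GLGame : Type where
  | atg   : ℕ → GLGame
  | atgd  : ℕ → GLGame
  | comp  : GLGame → GLGame → GLGame
  | cha   : GLGame → GLGame → GLGame
  | chd   : GLGame → GLGame → GLGame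
  | star  : GLGame → GLGame
  | cross : GLGame → GLGame
  | test  : GLForm → GLGame
  | dtest : GLForm → GLGame
end

noncomputable instance : DecidableEq GLForm := Classical.decEq _
noncomputable instance : DecidableEq GLGame := Classical.decEq _

/-! Complementation (negation normal form negation) and dual games. -/

mutual
def GLForm.compl : GLForm → GLForm
  | .atom p  => .natom p
  | .natom p => .atom p
  | .or φ ψ  => .and (GLForm.compl φ) (GLForm.compl ψ)
  | .and φ ψ => .or (GLForm.compl φ) (GLForm.compl ψ)
  | .dia γ φ => .dia (GLGame.dual γ) (GLForm.compl φ)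
def GLGame.dual : GLGame → GLGame
  | .atg g  => .atgd g
  | .atgd g => .atg g
  | .comp γ δ => .comp (GLGame.dual γ) (GLGame.dual δ)
  | .cha γ δ  => .chd (GLGame.dual γ) (GLGame.dual δ)
  | .chd γ δ  => .cha (GLGame.dual γ) (GLGame.dual δ)
  | .star γ  => .cross (GLGame.dual γ)
  | .cross γ => .star (GLGame.dual γ)
  | .test φ  => .dtest (GLForm.compl φ)
  | .dtest φ => .test (GLForm.compl φ)
end

/-! Formula contexts for game logic: a context is a formula (resp. game) with a
    unique occurrence of a hole, which sits either in formula position or in game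
    position.  `fill` substitutes the hole. -/

mutual
/-- Formula context with a unique formula-position hole. -/
inductive FCtxF : Type where
  | hole : FCtxF
  | orL  : FCtxF → GLForm → FCtxF
  | orR  : GLForm → FCtxF → FCtxF
  | andL : FCtxF → GLForm → FCtxF
  | andR : GLForm → FCtxF → FCtxF
  | diaG : GCtxF → GLForm → FCtxF
  | diaF : GLGame → FCtxF → FCtxF
/-- Game context with a unique formula-position hole. -/
inductive GCtxF : Type where
  | compL : GCtxF → GLGame → GCtxF
  | compR : GLGame → GCtxF → GCtxF
  | chaL  : GCtxF → GLGame → GCtxF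
  | chaR  : GLGame → GCtxF → GCtxF
  | chdL  : GCtxF → GLGame → GCtxF
  | chdR  : GLGame → GCtxF → GCtxF
  | star  : GCtxF → GCtxF
  | cross : GCtxF → GCtxF
  | test  : FCtxF → GCtxF
  | dtest : FCtxF → GCtxF
end

mutual
/-- Formula context with a unique game-position hole. -/
inductive FCtxG : Type where
  | orL  : FCtxG → GLForm → FCtxG
  | orR  : GLForm → FCtxG → FCtxG
  | andL : FCtxG → GLForm → FCtxG
  | andR : GLForm → FCtxG → FCtxG
  | diaG : GCtxG → GLForm → FCtxG
  | diaF : GLGame → FCtxG → FCtxG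
/-- Game context with a unique game-position hole. -/
inductive GCtxG : Type where
  | hole  : GCtxG
  | compL : GCtxG → GLGame → GCtxG
  | compR : GLGame → GCtxG → GCtxG
  | chaL  : GCtxG → GLGame → GCtxG
  | chaR  : GLGame → GCtxG → GCtxG
  | chdL  : GCtxG → GLGame → GCtxG
  | chdR  : GLGame → GCtxG → GCtxG
  | star  : GCtxG → GCtxG
  | cross : GCtxG → GCtxG
  | test  : FCtxG → GCtxG
  | dtest : FCtxG → GCtxG
end

mutual
def FCtxF.fill : FCtxF → GLForm → GLForm
  | .hole, χ => χ
  | .orL c ψ, χ => .or (FCtxF.fill c χ) ψ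
  | .orR φ c, χ => .or φ (FCtxF.fill c χ)
  | .andL c ψ, χ => .and (FCtxF.fill c χ) ψ
  | .andR φ c, χ => .and φ (FCtxF.fill c χ)
  | .diaG c φ, χ => .dia (GCtxF.fill c χ) φ
  | .diaF γ c, χ => .dia γ (FCtxF.fill c χ)
def GCtxF.fill : GCtxF → GLForm → GLGame
  | .compL c δ, χ => .comp (GCtxF.fill c χ) δ
  | .compR γ c, χ => .comp γ (GCtxF.fill c χ)
  | .chaL c δ, χ => .cha (GCtxF.fill c χ) δ
  | .chaR γ c, χ => .cha γ (GCtxF.fill c χ)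
  | .chdL c δ, χ => .chd (GCtxF.fill c χ) δ
  | .chdR γ c, χ => .chd γ (GCtxF.fill c χ)
  | .star c, χ => .star (GCtxF.fill c χ)
  | .cross c, χ => .cross (GCtxF.fill c χ)
  | .test c, χ => .test (FCtxF.fill c χ)
  | .dtest c, χ => .dtest (FCtxF.fill c χ)
end

mutual
def FCtxG.fillG : FCtxG → GLGame → GLForm
  | .orL c ψ, δ => .or (FCtxG.fillG c δ) ψ
  | .orR φ c, δ => .or φ (FCtxG.fillG c δ)
  | .andL c ψ, δ => .and (FCtxG.fillG c δ) ψ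
  | .andR φ c, δ => .and φ (FCtxG.fillG c δ)
  | .diaG c φ, δ => .dia (GCtxG.fillG c δ) φ
  | .diaF γ c, δ => .dia γ (FCtxG.fillG c δ)
def GCtxG.fillG : GCtxG → GLGame → GLGame
  | .hole, δ => δ
  | .compL c δ', δ => .comp (GCtxG.fillG c δ) δ'
  | .compR γ c, δ => .comp γ (GCtxG.fillG c δ)
  | .chaL c δ', δ => .cha (GCtxG.fillG c δ) δ'
  | .chaR γ c, δ => .cha γ (GCtxG.fillG c δ)
  | .chdL c δ', δ => .chd (GCtxG.fillG c δ) δ'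
  | .chdR γ c, δ => .chd γ (GCtxG.fillG c δ)
  | .star c, δ => .star (GCtxG.fillG c δ)
  | .cross c, δ => .cross (GCtxG.fillG c δ)
  | .test c, δ => .test (FCtxG.fillG c δ)
  | .dtest c, δ => .dtest (FCtxG.fillG c δ)
end

/-! The cut-free sequent calculus G for game logic.  A sequent is a finite set
    of normal-form formulas, read disjunctively. -/

abbrev GLSeq := Finset GLForm

/-- Conjunction of a list of formulas (an arbitrary tautologous formula for the
    empty list). -/
def listAnd : List GLForm → GLForm
  | [] => .or (.atom 0) (.natom 0)
  | [φ] => φ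
  | φ :: ψ :: rest => .and φ (listAnd (ψ :: rest))

/-- `Φ̄`: the conjunction of the complements of the members of `Φ`. -/
noncomputable def seqCompl (Φ : GLSeq) : GLForm := listAnd (Φ.toList.map GLForm.compl)

/-- The sequent calculus `G`. -/
inductive GDer : GLSeq → Prop
  /-- axiom `Φ, Φ̄` -/
  | ax (Φ : GLSeq) : GDer (insert (seqCompl Φ) Φ)
  /-- weakening -/
  | weak {Φ} (φ) : GDer Φ → GDer (insert φ Φ)
  /-- monotone modal rule -/
  | modm {φ ψ g} : GDer {φ, ψ} → GDer {.dia (.atg g) φ, .dia (.atgd g) ψ}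
  /-- disjunction -/
  | orR {Φ φ ψ} : GDer (insert φ (insert ψ Φ)) → GDer (insert (.or φ ψ) Φ)
  /-- conjunction -/
  | andR {Φ φ ψ} : GDer (insert φ Φ) → GDer (insert ψ Φ) → GDer (insert (.and φ ψ) Φ)
  /-- angelic iteration -/
  | starR {Φ γ φ} : GDer (insert (.or φ (.dia γ (.dia (.star γ) φ))) Φ) →
      GDer (insert (.dia (.star γ) φ) Φ)
  /-- demonic iteration -/
  | crossR {Φ γ φ} : GDer (insert (.and φ (.dia γ (.dia (.cross γ) φ))) Φ) →
      GDer (insert (.dia (.cross γ) φ) Φ)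
  /-- angelic choice -/
  | chaR {Φ γ δ φ} : GDer (insert (.or (.dia γ φ) (.dia δ φ)) Φ) →
      GDer (insert (.dia (.cha γ δ) φ) Φ)
  /-- demonic choice -/
  | chdR {Φ γ δ φ} : GDer (insert (.and (.dia γ φ) (.dia δ φ)) Φ) →
      GDer (insert (.dia (.chd γ δ) φ) Φ)
  /-- angelic test -/
  | testR {Φ ψ φ} : GDer (insert (.and ψ φ) Φ) → GDer (insert (.dia (.test ψ) φ) Φ)
  /-- demonic test -/
  | dtestR {Φ ψ φ} : GDer (insert (.or ψ φ) Φ) → GDer (insert (.dia (.dtest ψ) φ) Φ)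
  /-- deep monotonicity rule for games: from `Φ, ψ(γ)` derive `Φ, ψ(χ! ; γ)` -/
  | monGd {Φ χ γ} (c : FCtxG) : GDer (insert (c.fillG γ) Φ) →
      GDer (insert (c.fillG (.comp (.dtest χ) γ)) Φ)
  /-- deep monotonicity rule for formulas: from `Φ, ψ(φ)` derive `Φ, ψ(⟨χ!⟩φ)` -/
  | monFd {Φ χ φ} (c : FCtxF) : GDer (insert (c.fill φ) Φ) →
      GDer (insert (c.fill (.dia (.dtest χ) φ)) Φ)
  /-- deep composition rule -/
  | compd {Φ γ δ φ} (c : FCtxF) : GDer (insert (c.fill (.dia γ (.dia δ φ))) Φ) →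
      GDer (insert (c.fill (.dia (.comp γ δ) φ)) Φ)
  /-- strengthened induction rule: from `Φ, φ ∧ ⟨γ⟩⟨(Φ̄! ; γ)×⟩⟨Φ̄!⟩φ` derive `Φ, ⟨γ×⟩φ` -/
  | inds {Φ γ φ} :
      GDer (insert (.and φ (.dia γ (.dia (.cross (.comp (.dtest (seqCompl Φ)) γ))
              (.dia (.dtest (seqCompl Φ)) φ)))) Φ) →
      GDer (insert (.dia (.cross γ) φ) Φ)

/-! Parikh's language of game logic: syntax, abbreviations, propositional
    tautologies, and Parikh's Hilbert system HilbP. -/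

mutual
inductive ParForm : Type where
  | atom : ℕ → ParForm
  | neg  : ParForm → ParForm
  | or   : ParForm → ParForm → ParForm
  | dia  : ParGame → ParForm → ParForm
inductive ParGame : Type where
  | atg  : ℕ → ParGame
  | comp : ParGame → ParGame → ParGame
  | cha  : ParGame → ParGame → ParGame
  | star : ParGame → ParGame
  | dual : ParGame → ParGame
  | test : ParForm → ParGame
end

/-- Implication, as the usual abbreviation. -/
def pimp (φ ψ : ParForm) : ParForm := .or (.neg φ) ψ
/-- Conjunction, as the usual abbreviation. -/
def pand (φ ψ : ParForm) : ParForm := .neg (.or (.neg φ) (.neg ψ))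
/-- Bi-implication, as the usual abbreviation. -/
def piff (φ ψ : ParForm) : ParForm := pand (pimp φ ψ) (pimp ψ φ)

/-- Propositional evaluation of a formula relative to an arbitrary assignment of
    truth values to its non-Boolean components. -/
def peval (v : ParForm → Prop) : ParForm → Prop
  | .atom p  => v (.atom p)
  | .neg φ   => ¬ peval v φ
  | .or φ ψ  => peval v φ ∨ peval v ψ
  | .dia γ φ => v (.dia γ φ)

/-- `φ` is (a substitution instance of) a propositional tautology. -/
def PTaut (φ : ParForm) : Prop := ∀ v, peval v φ

/-- Parikh's Hilbert system for game logic. -/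
inductive HilbP : ParForm → Prop
  | taut {φ} : PTaut φ → HilbP φ
  | axComp {γ δ φ} : HilbP (piff (.dia (.comp γ δ) φ) (.dia γ (.dia δ φ)))
  | axCha {γ δ φ} : HilbP (piff (.dia (.cha γ δ) φ) (.or (.dia γ φ) (.dia δ φ)))
  | axStar {γ φ} : HilbP (piff (.dia (.star γ) φ) (.or φ (.dia γ (.dia (.star γ) φ))))
  | axTest {ψ φ} : HilbP (piff (.dia (.test ψ) φ) (pand ψ φ))
  | axDual {γ φ} : HilbP (piff (.dia (.dual γ) φ) (.neg (.dia γ (.neg φ))))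
  | mp {φ ψ} : HilbP φ → HilbP (pimp φ ψ) → HilbP ψ
  | mon {φ ψ} (γ) : HilbP (pimp φ ψ) → HilbP (pimp (.dia γ φ) (.dia γ ψ))
  | barInd {γ φ} : HilbP (pimp (.dia γ φ) φ) → HilbP (pimp (.dia (.star γ) φ) φ)

/-! The translation `pari` restricted to the normal-form language (viewed inside
    the full language): it replaces demonic operations by duals of angelic ones. -/

mutual
def pariNF : GLForm → ParForm
  | .atom p  => .atom p
  | .natom p => .neg (.atom p)
  | .or φ ψ  => .or (pariNF φ) (pariNF ψ)
  | .and φ ψ => .neg (.or (.neg (pariNF φ)) (.neg (pariNF ψ)))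
  | .dia γ φ => .dia (pariNFG γ) (pariNF φ)
def pariNFG : GLGame → ParGame
  | .atg g  => .atg g
  | .atgd g => .dual (.atg g)
  | .comp γ δ => .comp (pariNFG γ) (pariNFG δ)
  | .cha γ δ  => .cha (pariNFG γ) (pariNFG δ)
  | .chd γ δ  => .dual (.cha (.dual (pariNFG γ)) (.dual (pariNFG δ)))
  | .star γ  => .star (pariNFG γ)
  | .cross γ => .dual (.star (.dual (pariNFG γ)))
  | .test φ  => .test (pariNF φ)
  | .dtest φ => .dual (.test (.neg (pariNF φ)))
end


/-! ### Auxiliary machinery -/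

/-- Falsum. -/
def pfalse : ParForm := .neg (.or (.atom 0) (.neg (.atom 0)))

def listOr : List ParForm → ParForm
  | [] => pfalse
  | φ :: l => .or φ (listOr l)

/-- The translated disjunction of a sequent. -/
noncomputable def sdisj (Φ : GLSeq) : ParForm := listOr (Φ.toList.map pariNF)

lemma peval_listOr (v : ParForm → Prop) : ∀ l : List ParForm,
    peval v (listOr l) ↔ ∃ φ ∈ l, peval v φ
  | [] => by simp [listOr, pfalse, peval]
  | φ :: l => by simp [listOr, peval, peval_listOr v l]

lemma peval_sdisj (v : ParForm → Prop) (Φ : GLSeq) :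
    peval v (sdisj Φ) ↔ ∃ φ ∈ Φ, peval v (pariNF φ) := by
  simp [sdisj, peval_listOr]

/-- Tautological consequence from a list of premises. -/
lemma tautConsL : ∀ (l : List ParForm) {ψ : ParForm},
    (∀ φ ∈ l, HilbP φ) → (∀ v, (∀ φ ∈ l, peval v φ) → peval v ψ) → HilbP ψ
  | [], ψ, _, h => HilbP.taut (fun v => h v (by simp))
  | φ :: t, ψ, hs, h =>
      HilbP.mp (hs φ (by simp)) <|
        tautConsL t (fun x hx => hs x (by simp [hx])) (fun v ht => by
          simp only [pimp, peval]
          by_cases hφ : peval v φ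
          · exact Or.inr (h v (by
              intro x hx
              rcases List.mem_cons.1 hx with rfl | hx
              · exact hφ
              · exact ht x hx))
          · exact Or.inl hφ)

lemma peval_piff {v φ ψ} : peval v (piff φ ψ) ↔ (peval v φ ↔ peval v ψ) := by
  simp [piff, pand, pimp, peval]; tauto

lemma peval_pimp {v φ ψ} : peval v (pimp φ ψ) ↔ (peval v φ → peval v ψ) := by
  simp [pimp, peval]; tauto

lemma peval_pand {v φ ψ} : peval v (pand φ ψ) ↔ (peval v φ ∧ peval v ψ) := by
  simp [pand, pimp, peval]

lemma tc1 {a ψ} (h1 : HilbP a) (h : ∀ v, peval v a → peval v ψ) : HilbP ψ :=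
  HilbP.mp h1 (HilbP.taut fun v => peval_pimp.2 (h v))

lemma tc2 {a b ψ} (h1 : HilbP a) (h2 : HilbP b)
    (h : ∀ v, peval v a → peval v b → peval v ψ) : HilbP ψ :=
  HilbP.mp h2 (tc1 h1 (fun v ha => peval_pimp.2 (h v ha)))

lemma tc3 {a b c ψ} (h1 : HilbP a) (h2 : HilbP b) (h3 : HilbP c)
    (h : ∀ v, peval v a → peval v b → peval v c → peval v ψ) : HilbP ψ :=
  HilbP.mp h3 (tc2 h1 h2 (fun v ha hb => peval_pimp.2 (h v ha hb)))

lemma tc4 {a b c d ψ} (h1 : HilbP a) (h2 : HilbP b) (h3 : HilbP c) (h4 : HilbP d)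
    (h : ∀ v, peval v a → peval v b → peval v c → peval v d → peval v ψ) : HilbP ψ :=
  HilbP.mp h4 (tc3 h1 h2 h3 (fun v ha hb hc => peval_pimp.2 (h v ha hb hc)))

lemma tc5 {a b c d e ψ} (h1 : HilbP a) (h2 : HilbP b) (h3 : HilbP c) (h4 : HilbP d)
    (h5 : HilbP e)
    (h : ∀ v, peval v a → peval v b → peval v c → peval v d → peval v e → peval v ψ) :
    HilbP ψ :=
  HilbP.mp h5 (tc4 h1 h2 h3 h4 (fun v ha hb hc hd => peval_pimp.2 (h v ha hb hc hd)))

lemma tc6 {a b c d e f ψ} (h1 : HilbP a) (h2 : HilbP b) (h3 : HilbP c) (h4 : HilbP d)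
    (h5 : HilbP e) (h6 : HilbP f)
    (h : ∀ v, peval v a → peval v b → peval v c → peval v d → peval v e → peval v f →
      peval v ψ) : HilbP ψ :=
  HilbP.mp h6 (tc5 h1 h2 h3 h4 h5 (fun v ha hb hc hd he => peval_pimp.2 (h v ha hb hc hd he)))

lemma tc7 {a b c d e f g ψ} (h1 : HilbP a) (h2 : HilbP b) (h3 : HilbP c) (h4 : HilbP d)
    (h5 : HilbP e) (h6 : HilbP f) (h7 : HilbP g)
    (h : ∀ v, peval v a → peval v b → peval v c → peval v d → peval v e → peval v f →
      peval v g → peval v ψ) : HilbP ψ :=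
  HilbP.mp h7 (tc6 h1 h2 h3 h4 h5 h6
    (fun v ha hb hc hd he hf => peval_pimp.2 (h v ha hb hc hd he hf)))

lemma tc8 {a b c d e f g i ψ} (h1 : HilbP a) (h2 : HilbP b) (h3 : HilbP c) (h4 : HilbP d)
    (h5 : HilbP e) (h6 : HilbP f) (h7 : HilbP g) (h8 : HilbP i)
    (h : ∀ v, peval v a → peval v b → peval v c → peval v d → peval v e → peval v f →
      peval v g → peval v i → peval v ψ) : HilbP ψ :=
  HilbP.mp h8 (tc7 h1 h2 h3 h4 h5 h6 h7
    (fun v ha hb hc hd he hf hg => peval_pimp.2 (h v ha hb hc hd he hf hg)))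

lemma tc9 {a b c d e f g i j ψ} (h1 : HilbP a) (h2 : HilbP b) (h3 : HilbP c) (h4 : HilbP d)
    (h5 : HilbP e) (h6 : HilbP f) (h7 : HilbP g) (h8 : HilbP i) (h9 : HilbP j)
    (h : ∀ v, peval v a → peval v b → peval v c → peval v d → peval v e → peval v f →
      peval v g → peval v i → peval v j → peval v ψ) : HilbP ψ :=
  HilbP.mp h9 (tc8 h1 h2 h3 h4 h5 h6 h7 h8
    (fun v ha hb hc hd he hf hg hi => peval_pimp.2 (h v ha hb hc hd he hf hg hi)))

/-- Extract forward implication of a provable equivalence. -/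
lemma piff_mp {φ ψ} (h : HilbP (piff φ ψ)) : HilbP (pimp φ ψ) :=
  tc1 h (fun v hv => by rw [peval_piff] at hv; rw [peval_pimp]; tauto)

lemma piff_mpr {φ ψ} (h : HilbP (piff φ ψ)) : HilbP (pimp ψ φ) :=
  tc1 h (fun v hv => by rw [peval_piff] at hv; rw [peval_pimp]; tauto)

/-- Congruence of diamonds under provable equivalence. -/
lemma diaCong (γ : ParGame) {φ ψ} (h : HilbP (piff φ ψ)) :
    HilbP (piff (.dia γ φ) (.dia γ ψ)) :=
  tc2 (HilbP.mon γ (piff_mp h)) (HilbP.mon γ (piff_mpr h)) (fun v ha hb => by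
    rw [peval_pimp] at ha hb; rw [peval_piff]; tauto)


/-! ### Derived game-logic facts in HilbP -/

/-- `⟨α⟩φ ↔ ¬⟨α^d⟩¬φ`. -/
lemma dualElim (α : ParGame) (χ : ParForm) :
    HilbP (piff (.dia α χ) (.neg (.dia (.dual α) (.neg χ)))) := by
  have a1 : HilbP (piff (ParForm.dia (.dual α) (.neg χ)) (.neg (.dia α (.neg (.neg χ))))) :=
    HilbP.axDual
  have a2 : HilbP (piff (ParForm.dia α (.neg (.neg χ))) (.dia α χ)) :=
    diaCong α (HilbP.taut (fun v => by rw [peval_piff]; simp [peval]))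
  exact tc2 a1 a2 (fun v h1 h2 => by
    rw [peval_piff] at h1 h2 ⊢; simp only [peval] at *; tauto)

/-- `⟨ψ!⟩χ ↔ ψ ∨ χ` for the translated demonic test. -/
lemma dtestAux (A χ : ParForm) :
    HilbP (piff (.dia (.dual (.test (.neg A))) χ) (.or A χ)) := by
  have a1 : HilbP (piff (ParForm.dia (.dual (.test (.neg A))) χ)
      (.neg (.dia (.test (.neg A)) (.neg χ)))) := HilbP.axDual
  have a2 : HilbP (piff (ParForm.dia (.test (.neg A)) (.neg χ)) (pand (.neg A) (.neg χ))) :=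
    HilbP.axTest
  exact tc2 a1 a2 (fun v h1 h2 => by
    rw [peval_piff] at h1 h2 ⊢; rw [peval_pand] at h2; simp only [peval] at *; tauto)

/-- Monotonicity of iteration. -/
lemma monStarP {α β : ParGame} (h : ∀ ξ, HilbP (pimp (.dia α ξ) (.dia β ξ))) (φ : ParForm) :
    HilbP (pimp (.dia (.star α) φ) (.dia (.star β) φ)) := by
  set T : ParForm := .dia (.star β) φ with hT
  have step1 : HilbP (pimp (.dia α T) T) :=
    tc2 (h T) (HilbP.axStar (γ := β) (φ := φ)) (fun v h1 h2 => by
      rw [peval_pimp] at h1 ⊢; rw [peval_piff] at h2; simp only [peval] at *; tauto)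
  have step2 : HilbP (pimp (.dia (.star α) T) T) := HilbP.barInd step1
  have step3 : HilbP (pimp φ T) :=
    tc1 (HilbP.axStar (γ := β) (φ := φ)) (fun v h2 => by
      rw [peval_piff] at h2; rw [peval_pimp]; simp only [peval] at *; tauto)
  have step4 : HilbP (pimp (.dia (.star α) φ) (.dia (.star α) T)) := HilbP.mon _ step3
  exact tc2 step4 step2 (fun v h1 h2 => by
    rw [peval_pimp] at h1 h2 ⊢; tauto)

/-- Congruence of iteration. -/
lemma starCongP {α β : ParGame} (h : ∀ ξ, HilbP (piff (.dia α ξ) (.dia β ξ))) (φ : ParForm) :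
    HilbP (piff (.dia (.star α) φ) (.dia (.star β) φ)) :=
  tc2 (monStarP (fun ξ => piff_mp (h ξ)) φ) (monStarP (fun ξ => piff_mpr (h ξ)) φ)
    (fun v h1 h2 => by rw [peval_pimp] at h1 h2; rw [peval_piff]; tauto)

/-- Unfolding of the translated demonic iteration:
    `⟨(α^d)*^d⟩χ ↔ χ ∧ ⟨α⟩⟨(α^d)*^d⟩χ`. -/
lemma crossUnfold (α : ParGame) (χ : ParForm) :
    HilbP (piff (.dia (.dual (.star (.dual α))) χ)
      (pand χ (.dia α (.dia (.dual (.star (.dual α))) χ)))) := by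
  set σ : ParGame := .star (.dual α) with hσ
  set C : ParForm := .dia (.dual σ) χ with hC
  have a1 : HilbP (piff C (.neg (.dia σ (.neg χ)))) := HilbP.axDual
  have a2 : HilbP (piff (ParForm.dia σ (.neg χ))
      (.or (.neg χ) (.dia (.dual α) (.dia σ (.neg χ))))) := HilbP.axStar
  have a3 : HilbP (piff (ParForm.dia (.dual α) (.dia σ (.neg χ)))
      (.neg (.dia α (.neg (.dia σ (.neg χ)))))) := HilbP.axDual
  have a4 : HilbP (piff (ParForm.dia α (.neg (.dia σ (.neg χ)))) (.dia α C)) :=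
    diaCong α (tc1 a1 (fun v h1 => by
      rw [peval_piff] at h1 ⊢; simp only [peval] at *; tauto))
  exact tc4 a1 a2 a3 a4 (fun v h1 h2 h3 h4 => by
    rw [peval_piff] at h1 h2 h3 h4 ⊢; rw [peval_pand]; simp only [peval] at *; tauto)


/-- Double-negation congruence under a diamond. -/
lemma diaDN (α : ParGame) (χ : ParForm) :
    HilbP (piff (.dia α (.neg (.neg χ))) (.dia α χ)) :=
  diaCong α (HilbP.taut (fun v => by rw [peval_piff]; simp [peval]))

lemma piffRefl (a : ParForm) : HilbP (piff a a) :=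
  HilbP.taut (fun v => by rw [peval_piff])

lemma piffSymm {a b} (h : HilbP (piff a b)) : HilbP (piff b a) :=
  tc1 h (fun v h1 => by rw [peval_piff] at h1 ⊢; tauto)

lemma piffTrans {a b c} (h1 : HilbP (piff a b)) (h2 : HilbP (piff b c)) :
    HilbP (piff a c) :=
  tc2 h1 h2 (fun v ha hb => by rw [peval_piff] at ha hb ⊢; tauto)

lemma negCong {a b} (h : HilbP (piff a b)) : HilbP (piff (.neg a) (.neg b)) :=
  tc1 h (fun v h1 => by rw [peval_piff] at h1 ⊢; simp only [peval]; tauto)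

lemma negNegP (a : ParForm) : HilbP (piff (.neg (.neg a)) a) :=
  HilbP.taut (fun v => by rw [peval_piff]; simp [peval])

/-- Pointwise provable equivalence of games. -/
def GeqP (α β : ParGame) : Prop := ∀ ξ, HilbP (piff (.dia α ξ) (.dia β ξ))

lemma geqRefl (α : ParGame) : GeqP α α := fun ξ => piffRefl _
lemma geqSymm {α β} (h : GeqP α β) : GeqP β α := fun ξ => piffSymm (h ξ)
lemma geqTrans {α β γ} (h1 : GeqP α β) (h2 : GeqP β γ) : GeqP α γ :=
  fun ξ => piffTrans (h1 ξ) (h2 ξ)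

lemma compCongP {α β α' β'} (h1 : GeqP α β) (h2 : GeqP α' β') :
    GeqP (.comp α α') (.comp β β') := fun ξ =>
  piffTrans HilbP.axComp <| piffTrans (diaCong α (h2 ξ)) <|
    piffTrans (h1 _) (piffSymm HilbP.axComp)

lemma chaCongP {α β α' β'} (h1 : GeqP α β) (h2 : GeqP α' β') :
    GeqP (.cha α α') (.cha β β') := fun ξ =>
  tc4 (HilbP.axCha (γ := α) (δ := α') (φ := ξ)) (HilbP.axCha (γ := β) (δ := β') (φ := ξ))
    (h1 ξ) (h2 ξ) (fun v a1 a2 a3 a4 => by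
      rw [peval_piff] at a1 a2 a3 a4 ⊢; simp only [peval] at *; tauto)

lemma dualCongP {α β} (h : GeqP α β) : GeqP (.dual α) (.dual β) := fun ξ =>
  piffTrans HilbP.axDual <| piffTrans (negCong (h _)) (piffSymm HilbP.axDual)

lemma testCongP {a b} (h : HilbP (piff a b)) : GeqP (.test a) (.test b) := fun ξ =>
  tc3 (HilbP.axTest (ψ := a) (φ := ξ)) (HilbP.axTest (ψ := b) (φ := ξ)) h
    (fun v a1 a2 a3 => by
      rw [peval_piff] at a1 a2 a3 ⊢; rw [peval_pand] at a1 a2; tauto)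

lemma starCongGP {α β} (h : GeqP α β) : GeqP (.star α) (.star β) := fun ξ =>
  starCongP h ξ

lemma dualDualP (α : ParGame) : GeqP α (.dual (.dual α)) := fun ξ =>
  tc3 (HilbP.axDual (γ := .dual α) (φ := ξ)) (HilbP.axDual (γ := α) (φ := .neg ξ))
    (diaDN α ξ) (fun v a1 a2 a3 => by
      rw [peval_piff] at a1 a2 a3 ⊢; simp only [peval] at *; tauto)

lemma dualCompP (α β : ParGame) :
    GeqP (.comp (.dual α) (.dual β)) (.dual (.comp α β)) := fun ξ => by
  have a1 : HilbP (piff (ParForm.dia (.comp (.dual α) (.dual β)) ξ)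
      (.dia (.dual α) (.dia (.dual β) ξ))) := HilbP.axComp
  have a2 : HilbP (piff (ParForm.dia (.dual α) (.dia (.dual β) ξ))
      (.neg (.dia α (.neg (.dia (.dual β) ξ))))) := HilbP.axDual
  have a3 : HilbP (piff (ParForm.dia (.dual β) ξ) (.neg (.dia β (.neg ξ)))) := HilbP.axDual
  have a4 : HilbP (piff (ParForm.dia α (.neg (.dia (.dual β) ξ)))
      (.dia α (.dia β (.neg ξ)))) :=
    diaCong α (piffTrans (negCong a3) (negNegP _))
  have a5 : HilbP (piff (ParForm.dia (.dual (.comp α β)) ξ)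
      (.neg (.dia (.comp α β) (.neg ξ)))) := HilbP.axDual
  have a6 : HilbP (piff (ParForm.dia (.comp α β) (.neg ξ))
      (.dia α (.dia β (.neg ξ)))) := HilbP.axComp
  exact tc6 a1 a2 a4 a5 a6 a3 (fun v h1 h2 h3 h4 h5 h6 => by
    rw [peval_piff] at h1 h2 h3 h4 h5 h6 ⊢; simp only [peval] at *; tauto)

mutual
/-- `pari(φ̄) ↔ ¬pari(φ)` is provable. -/
theorem complEquiv : ∀ φ : GLForm,
    HilbP (piff (pariNF (GLForm.compl φ)) (.neg (pariNF φ)))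
  | .atom p => by
      simp only [GLForm.compl, pariNF]
      exact piffRefl _
  | .natom p => by
      simp only [GLForm.compl, pariNF]
      exact piffSymm (negNegP _)
  | .or φ ψ => by
      simp only [GLForm.compl, pariNF]
      exact tc2 (complEquiv φ) (complEquiv ψ) (fun v h1 h2 => by
        rw [peval_piff] at h1 h2 ⊢; simp only [peval] at *; tauto)
  | .and φ ψ => by
      simp only [GLForm.compl, pariNF]
      exact tc2 (complEquiv φ) (complEquiv ψ) (fun v h1 h2 => by
        rw [peval_piff] at h1 h2 ⊢; simp only [peval] at *; tauto)
  | .dia γ φ => by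
      simp only [GLForm.compl, pariNF]
      refine piffTrans (dualEquiv' γ (pariNF (GLForm.compl φ))) ?_
      refine piffTrans (HilbP.axDual (γ := pariNFG γ) (φ := pariNF (GLForm.compl φ))) ?_
      refine negCong (diaCong (pariNFG γ) ?_)
      exact piffTrans (negCong (complEquiv φ)) (negNegP _)

/-- `pari(γ∂)` is provably pointwise equivalent to `(pari γ)^d`. -/
theorem dualEquiv' : ∀ (γ : GLGame),
    GeqP (pariNFG (GLGame.dual γ)) (.dual (pariNFG γ))
  | .atg g => by
      simp only [GLGame.dual, pariNFG]; exact geqRefl _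
  | .atgd g => by
      simp only [GLGame.dual, pariNFG]; exact dualDualP _
  | .comp γ δ => by
      simp only [GLGame.dual, pariNFG]
      refine geqTrans (compCongP (dualEquiv' γ) (dualEquiv' δ)) ?_
      -- `(pari γ)^d ; (pari δ)^d  ≈  (pari γ ; pari δ)^d`
      exact dualCompP _ _
  | .cha γ δ => by
      simp only [GLGame.dual, pariNFG]
      refine geqTrans (dualCongP (chaCongP (dualCongP (dualEquiv' γ))
        (dualCongP (dualEquiv' δ)))) ?_
      exact dualCongP (chaCongP (geqSymm (dualDualP _)) (geqSymm (dualDualP _)))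
  | .chd γ δ => by
      simp only [GLGame.dual, pariNFG]
      refine geqTrans (chaCongP (dualEquiv' γ) (dualEquiv' δ)) ?_
      exact dualDualP _
  | .star γ => by
      simp only [GLGame.dual, pariNFG]
      exact dualCongP (starCongGP (geqTrans (dualCongP (dualEquiv' γ))
        (geqSymm (dualDualP _))))
  | .cross γ => by
      simp only [GLGame.dual, pariNFG]
      refine geqTrans (starCongGP (dualEquiv' γ)) ?_
      exact dualDualP _
  | .test φ => by
      simp only [GLGame.dual, pariNFG]
      exact dualCongP (testCongP (piffTrans (negCong (complEquiv φ)) (negNegP _)))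
  | .dtest φ => by
      simp only [GLGame.dual, pariNFG]
      exact geqTrans (testCongP (complEquiv φ)) (dualDualP _)
end

/-- `⟨pari(γ∂)⟩χ ↔ ¬⟨pari(γ)⟩¬χ` is provable. -/
lemma dualEquiv (γ : GLGame) (χ : ParForm) :
    HilbP (piff (.dia (pariNFG (GLGame.dual γ)) χ) (.neg (.dia (pariNFG γ) (.neg χ)))) :=
  piffTrans (dualEquiv' γ χ) HilbP.axDual


/-! ### Monotonicity infrastructure -/

/-- Pointwise provable inclusion of games. -/
def GleP (α β : ParGame) : Prop := ∀ ξ, HilbP (pimp (.dia α ξ) (.dia β ξ))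

lemma gleRefl (α : ParGame) : GleP α α := fun ξ =>
  HilbP.taut (fun v => by rw [peval_pimp]; tauto)

lemma gleOfGeq {α β} (h : GeqP α β) : GleP α β := fun ξ =>
  tc1 (h ξ) (fun v h1 => by rw [peval_piff] at h1; rw [peval_pimp]; tauto)

lemma compMonoP {α β α' β'} (h1 : GleP α β) (h2 : GleP α' β') :
    GleP (.comp α α') (.comp β β') := fun ξ => by
  have m1 : HilbP (pimp (ParForm.dia α (.dia α' ξ)) (.dia α (.dia β' ξ))) :=
    HilbP.mon α (h2 ξ)
  have m2 : HilbP (pimp (ParForm.dia α (.dia β' ξ)) (.dia β (.dia β' ξ))) :=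
    h1 (.dia β' ξ)
  exact tc4 (HilbP.axComp (γ := α) (δ := α') (φ := ξ))
    (HilbP.axComp (γ := β) (δ := β') (φ := ξ)) m1 m2
    (fun v a1 a2 a3 a4 => by
      rw [peval_piff] at a1 a2; rw [peval_pimp] at a3 a4 ⊢; tauto)

lemma chaMonoP {α β α' β'} (h1 : GleP α β) (h2 : GleP α' β') :
    GleP (.cha α α') (.cha β β') := fun ξ =>
  tc4 (HilbP.axCha (γ := α) (δ := α') (φ := ξ)) (HilbP.axCha (γ := β) (δ := β') (φ := ξ))
    (h1 ξ) (h2 ξ) (fun v a1 a2 a3 a4 => by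
      rw [peval_piff] at a1 a2; rw [peval_pimp] at a3 a4 ⊢
      simp only [peval] at *; tauto)

lemma dualMonoP {α β} (h : GleP α β) : GleP (.dual β) (.dual α) := fun ξ =>
  tc3 (HilbP.axDual (γ := α) (φ := ξ)) (HilbP.axDual (γ := β) (φ := ξ)) (h (.neg ξ))
    (fun v a1 a2 a3 => by
      rw [peval_piff] at a1 a2; rw [peval_pimp] at a3 ⊢
      simp only [peval] at *; tauto)

lemma starMonoP {α β} (h : GleP α β) : GleP (.star α) (.star β) := fun ξ =>
  monStarP h ξ

lemma testMonoP {a b} (h : HilbP (pimp a b)) : GleP (.test a) (.test b) := fun ξ =>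
  tc3 (HilbP.axTest (ψ := a) (φ := ξ)) (HilbP.axTest (ψ := b) (φ := ξ)) h
    (fun v a1 a2 a3 => by
      rw [peval_piff] at a1 a2; rw [peval_pand] at a1 a2
      rw [peval_pimp] at a3 ⊢; tauto)

lemma negMonoP {a b} (h : HilbP (pimp a b)) : HilbP (pimp (.neg b) (.neg a)) :=
  tc1 h (fun v h1 => by rw [peval_pimp] at h1 ⊢; simp only [peval]; tauto)

mutual
theorem fillFMono : ∀ (c : FCtxF) {φ ψ : GLForm},
    HilbP (pimp (pariNF φ) (pariNF ψ)) →
    HilbP (pimp (pariNF (FCtxF.fill c φ)) (pariNF (FCtxF.fill c ψ)))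
  | .hole, φ, ψ, h => by simpa only [FCtxF.fill] using h
  | .orL c χ, φ, ψ, h => by
      simp only [FCtxF.fill, pariNF]
      exact tc1 (fillFMono c h) (fun v h1 => by
        rw [peval_pimp] at h1 ⊢; simp only [peval] at *; tauto)
  | .orR χ c, φ, ψ, h => by
      simp only [FCtxF.fill, pariNF]
      exact tc1 (fillFMono c h) (fun v h1 => by
        rw [peval_pimp] at h1 ⊢; simp only [peval] at *; tauto)
  | .andL c χ, φ, ψ, h => by
      simp only [FCtxF.fill, pariNF]
      exact tc1 (fillFMono c h) (fun v h1 => by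
        rw [peval_pimp] at h1 ⊢; simp only [peval] at *; tauto)
  | .andR χ c, φ, ψ, h => by
      simp only [FCtxF.fill, pariNF]
      exact tc1 (fillFMono c h) (fun v h1 => by
        rw [peval_pimp] at h1 ⊢; simp only [peval] at *; tauto)
  | .diaG c χ, φ, ψ, h => by
      simp only [FCtxF.fill, pariNF]
      exact fillGMono c h (pariNF χ)
  | .diaF γ c, φ, ψ, h => by
      simp only [FCtxF.fill, pariNF]
      exact HilbP.mon _ (fillFMono c h)

theorem fillGMono : ∀ (c : GCtxF) {φ ψ : GLForm},
    HilbP (pimp (pariNF φ) (pariNF ψ)) →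
    GleP (pariNFG (GCtxF.fill c φ)) (pariNFG (GCtxF.fill c ψ))
  | .compL c δ, φ, ψ, h => by
      simp only [GCtxF.fill, pariNFG]
      exact compMonoP (fillGMono c h) (gleRefl _)
  | .compR γ c, φ, ψ, h => by
      simp only [GCtxF.fill, pariNFG]
      exact compMonoP (gleRefl _) (fillGMono c h)
  | .chaL c δ, φ, ψ, h => by
      simp only [GCtxF.fill, pariNFG]
      exact chaMonoP (fillGMono c h) (gleRefl _)
  | .chaR γ c, φ, ψ, h => by
      simp only [GCtxF.fill, pariNFG]
      exact chaMonoP (gleRefl _) (fillGMono c h)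
  | .chdL c δ, φ, ψ, h => by
      simp only [GCtxF.fill, pariNFG]
      exact dualMonoP (chaMonoP (dualMonoP (fillGMono c h)) (gleRefl _))
  | .chdR γ c, φ, ψ, h => by
      simp only [GCtxF.fill, pariNFG]
      exact dualMonoP (chaMonoP (gleRefl _) (dualMonoP (fillGMono c h)))
  | .star c, φ, ψ, h => by
      simp only [GCtxF.fill, pariNFG]
      exact starMonoP (fillGMono c h)
  | .cross c, φ, ψ, h => by
      simp only [GCtxF.fill, pariNFG]
      exact dualMonoP (starMonoP (dualMonoP (fillGMono c h)))
  | .test c, φ, ψ, h => by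
      simp only [GCtxF.fill, pariNFG]
      exact testMonoP (fillFMono c h)
  | .dtest c, φ, ψ, h => by
      simp only [GCtxF.fill, pariNFG]
      exact dualMonoP (testMonoP (negMonoP (fillFMono c h)))
end

mutual
theorem fillGFMono : ∀ (c : FCtxG) {γ δ : GLGame},
    GleP (pariNFG γ) (pariNFG δ) →
    HilbP (pimp (pariNF (FCtxG.fillG c γ)) (pariNF (FCtxG.fillG c δ)))
  | .orL c χ, γ, δ, h => by
      simp only [FCtxG.fillG, pariNF]
      exact tc1 (fillGFMono c h) (fun v h1 => by
        rw [peval_pimp] at h1 ⊢; simp only [peval] at *; tauto)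
  | .orR χ c, γ, δ, h => by
      simp only [FCtxG.fillG, pariNF]
      exact tc1 (fillGFMono c h) (fun v h1 => by
        rw [peval_pimp] at h1 ⊢; simp only [peval] at *; tauto)
  | .andL c χ, γ, δ, h => by
      simp only [FCtxG.fillG, pariNF]
      exact tc1 (fillGFMono c h) (fun v h1 => by
        rw [peval_pimp] at h1 ⊢; simp only [peval] at *; tauto)
  | .andR χ c, γ, δ, h => by
      simp only [FCtxG.fillG, pariNF]
      exact tc1 (fillGFMono c h) (fun v h1 => by
        rw [peval_pimp] at h1 ⊢; simp only [peval] at *; tauto)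
  | .diaG c χ, γ, δ, h => by
      simp only [FCtxG.fillG, pariNF]
      exact fillGGMono c h (pariNF χ)
  | .diaF γ' c, γ, δ, h => by
      simp only [FCtxG.fillG, pariNF]
      exact HilbP.mon _ (fillGFMono c h)

theorem fillGGMono : ∀ (c : GCtxG) {γ δ : GLGame},
    GleP (pariNFG γ) (pariNFG δ) →
    GleP (pariNFG (GCtxG.fillG c γ)) (pariNFG (GCtxG.fillG c δ))
  | .hole, γ, δ, h => by simpa only [GCtxG.fillG] using h
  | .compL c δ', γ, δ, h => by
      simp only [GCtxG.fillG, pariNFG]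
      exact compMonoP (fillGGMono c h) (gleRefl _)
  | .compR γ' c, γ, δ, h => by
      simp only [GCtxG.fillG, pariNFG]
      exact compMonoP (gleRefl _) (fillGGMono c h)
  | .chaL c δ', γ, δ, h => by
      simp only [GCtxG.fillG, pariNFG]
      exact chaMonoP (fillGGMono c h) (gleRefl _)
  | .chaR γ' c, γ, δ, h => by
      simp only [GCtxG.fillG, pariNFG]
      exact chaMonoP (gleRefl _) (fillGGMono c h)
  | .chdL c δ', γ, δ, h => by
      simp only [GCtxG.fillG, pariNFG]
      exact dualMonoP (chaMonoP (dualMonoP (fillGGMono c h)) (gleRefl _))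
  | .chdR γ' c, γ, δ, h => by
      simp only [GCtxG.fillG, pariNFG]
      exact dualMonoP (chaMonoP (gleRefl _) (dualMonoP (fillGGMono c h)))
  | .star c, γ, δ, h => by
      simp only [GCtxG.fillG, pariNFG]
      exact starMonoP (fillGGMono c h)
  | .cross c, γ, δ, h => by
      simp only [GCtxG.fillG, pariNFG]
      exact dualMonoP (starMonoP (dualMonoP (fillGGMono c h)))
  | .test c, γ, δ, h => by
      simp only [GCtxG.fillG, pariNFG]
      exact testMonoP (fillGFMono c h)
  | .dtest c, γ, δ, h => by
      simp only [GCtxG.fillG, pariNFG]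
      exact dualMonoP (testMonoP (negMonoP (fillGFMono c h)))
end


/-! ### Sequent-level lemmas -/

lemma sdisjInsert (φ : GLForm) (Φ : GLSeq) :
    HilbP (piff (sdisj (insert φ Φ)) (.or (pariNF φ) (sdisj Φ))) :=
  HilbP.taut (fun v => by
    rw [peval_piff]
    simp only [peval, peval_sdisj]
    constructor
    · rintro ⟨x, hx, hp⟩
      rcases Finset.mem_insert.1 hx with rfl | hx
      · exact Or.inl hp
      · exact Or.inr ⟨x, hx, hp⟩
    · rintro (hp | ⟨x, hx, hp⟩)
      · exact ⟨φ, Finset.mem_insert_self _ _, hp⟩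
      · exact ⟨x, Finset.mem_insert_of_mem hx, hp⟩)

lemma sdisjSingle (φ : GLForm) : HilbP (piff (sdisj {φ}) (pariNF φ)) :=
  HilbP.taut (fun v => by
    rw [peval_piff]
    simp [peval_sdisj])

lemma sdisjPair (φ ψ : GLForm) :
    HilbP (piff (sdisj {φ, ψ}) (.or (pariNF φ) (pariNF ψ))) :=
  HilbP.taut (fun v => by
    rw [peval_piff]
    simp only [peval, peval_sdisj, Finset.mem_insert, Finset.mem_singleton]
    constructor
    · rintro ⟨x, rfl | rfl, hp⟩
      · exact Or.inl hp
      · exact Or.inr hp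
    · rintro (hp | hp)
      · exact ⟨φ, Or.inl rfl, hp⟩
      · exact ⟨ψ, Or.inr rfl, hp⟩)

lemma landComplEquiv : ∀ l : List GLForm,
    HilbP (piff (pariNF (listAnd (l.map GLForm.compl))) (.neg (listOr (l.map pariNF))))
  | [] => by
      simp only [List.map_nil, listAnd, listOr, pariNF]
      exact HilbP.taut (fun v => by rw [peval_piff]; simp [peval, pfalse]; tauto)
  | [φ] => by
      simp only [List.map_cons, List.map_nil, listAnd, listOr]
      exact tc1 (complEquiv φ) (fun v h1 => by
        rw [peval_piff] at h1 ⊢; simp only [peval, pfalse] at *; tauto)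
  | φ :: ψ :: t => by
      have ih := landComplEquiv (ψ :: t)
      simp only [List.map_cons] at ih ⊢
      simp only [listAnd, listOr, pariNF]
      simp only [listOr] at ih
      exact tc2 (complEquiv φ) ih (fun v h1 h2 => by
        rw [peval_piff] at h1 h2 ⊢; simp only [peval] at *; tauto)

lemma seqComplEquiv (Φ : GLSeq) :
    HilbP (piff (pariNF (seqCompl Φ)) (.neg (sdisj Φ))) := by
  have := landComplEquiv Φ.toList
  simpa only [sdisj, seqCompl] using this

/-- `⟨(pari γ)⊓(pari δ)⟩χ ↔ ⟨pari γ⟩χ ∧ ⟨pari δ⟩χ` in translated form. -/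
lemma chdEquiv (α β : ParGame) (χ : ParForm) :
    HilbP (piff (.dia (.dual (.cha (.dual α) (.dual β))) χ)
      (pand (.dia α χ) (.dia β χ))) := by
  have a1 : HilbP (piff (ParForm.dia (.dual (.cha (.dual α) (.dual β))) χ)
      (.neg (.dia (.cha (.dual α) (.dual β)) (.neg χ)))) := HilbP.axDual
  have a2 : HilbP (piff (ParForm.dia (.cha (.dual α) (.dual β)) (.neg χ))
      (.or (.dia (.dual α) (.neg χ)) (.dia (.dual β) (.neg χ)))) := HilbP.axCha
  have a3 : HilbP (piff (ParForm.dia (.dual α) (.neg χ))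
      (.neg (.dia α (.neg (.neg χ))))) := HilbP.axDual
  have a4 : HilbP (piff (ParForm.dia (.dual β) (.neg χ))
      (.neg (.dia β (.neg (.neg χ))))) := HilbP.axDual
  exact tc6 a1 a2 a3 a4 (diaDN α χ) (diaDN β χ) (fun v h1 h2 h3 h4 h5 h6 => by
    rw [peval_piff] at h1 h2 h3 h4 h5 h6 ⊢; rw [peval_pand]
    simp only [peval] at *; tauto)

/-- The base fact for the deep monotonicity rule: `⟨α⟩ξ → ⟨A! ; α⟩ξ`. -/
lemma dtestCompGle (A : ParForm) (α : ParGame) :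
    GleP α (.comp (.dual (.test (.neg A))) α) := fun ξ =>
  tc2 (HilbP.axComp (γ := .dual (.test (.neg A))) (δ := α) (φ := ξ))
    (dtestAux A (.dia α ξ)) (fun v h1 h2 => by
      rw [peval_piff] at h1 h2; rw [peval_pimp]
      simp only [peval] at *; tauto)

lemma peval_or {v a b} : peval v (ParForm.or a b) ↔ (peval v a ∨ peval v b) := Iff.rfl
lemma peval_neg {v a} : peval v (ParForm.neg a) ↔ ¬ peval v a := Iff.rfl
lemma peval_dia {v g a} : peval v (ParForm.dia g a) ↔ v (.dia g a) := Iff.rfl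

/-! ### Main soundness of G relative to HilbP + pari -/

set_option maxHeartbeats 2000000 in
theorem GDer_sound : ∀ {Φ : GLSeq}, GDer Φ → HilbP (sdisj Φ) := by
  intro Φ h
  induction h with
  | ax Φ =>
      exact tc2 (sdisjInsert (seqCompl Φ) Φ) (seqComplEquiv Φ) (fun v h1 h2 => by
        rw [peval_piff] at h1 h2; simp only [peval_or, peval_neg, peval_dia] at *; tauto)
  | weak φ _ ih =>
      exact tc2 (sdisjInsert φ _) ih (fun v h1 h2 => by
        rw [peval_piff] at h1; simp only [peval_or, peval_neg, peval_dia] at *; tauto)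
  | @modm φ ψ g _ ih =>
      have himp : HilbP (pimp (.neg (pariNF ψ)) (pariNF φ)) :=
        tc2 (sdisjPair φ ψ) ih (fun v h1 h2 => by
          rw [peval_piff] at h1; rw [peval_pimp]; simp only [peval_or, peval_neg, peval_dia] at *; tauto)
      have m := HilbP.mon (.atg g) himp
      exact tc3 (sdisjPair (.dia (.atg g) φ) (.dia (.atgd g) ψ)) m
        (HilbP.axDual (γ := .atg g) (φ := pariNF ψ)) (fun v h1 h2 h3 => by
          rw [peval_piff] at h1 h3; rw [peval_pimp] at h2
          simp only [pariNF, pariNFG, peval_or, peval_neg, peval_dia] at *; tauto)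
  | @orR Φ φ ψ _ ih =>
      exact tc4 (sdisjInsert φ (insert ψ Φ)) (sdisjInsert ψ Φ) ih
        (sdisjInsert (.or φ ψ) Φ) (fun v h1 h2 h3 h4 => by
          rw [peval_piff] at h1 h2 h4
          simp only [pariNF, peval_or, peval_neg, peval_dia] at *; tauto)
  | @andR Φ φ ψ _ _ ih1 ih2 =>
      exact tc5 (sdisjInsert φ Φ) (sdisjInsert ψ Φ) ih1 ih2
        (sdisjInsert (.and φ ψ) Φ) (fun v h1 h2 h3 h4 h5 => by
          rw [peval_piff] at h1 h2 h5
          simp only [pariNF, peval_or, peval_neg, peval_dia] at *; tauto)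
  | @starR Φ γ φ _ ih =>
      exact tc4 (sdisjInsert (.or φ (.dia γ (.dia (.star γ) φ))) Φ) ih
        (HilbP.axStar (γ := pariNFG γ) (φ := pariNF φ))
        (sdisjInsert (.dia (.star γ) φ) Φ) (fun v h1 h2 h3 h4 => by
          rw [peval_piff] at h1 h3 h4
          simp only [pariNF, pariNFG, peval_or, peval_neg, peval_dia] at *; tauto)
  | @crossR Φ γ φ _ ih =>
      exact tc4 (sdisjInsert (.and φ (.dia γ (.dia (.cross γ) φ))) Φ) ih
        (crossUnfold (pariNFG γ) (pariNF φ))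
        (sdisjInsert (.dia (.cross γ) φ) Φ) (fun v h1 h2 h3 h4 => by
          rw [peval_piff] at h1 h3 h4; rw [peval_pand] at h3
          simp only [pariNF, pariNFG, peval_or, peval_neg, peval_dia] at *; tauto)
  | @chaR Φ γ δ φ _ ih =>
      exact tc4 (sdisjInsert (.or (.dia γ φ) (.dia δ φ)) Φ) ih
        (HilbP.axCha (γ := pariNFG γ) (δ := pariNFG δ) (φ := pariNF φ))
        (sdisjInsert (.dia (.cha γ δ) φ) Φ) (fun v h1 h2 h3 h4 => by
          rw [peval_piff] at h1 h3 h4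
          simp only [pariNF, pariNFG, peval_or, peval_neg, peval_dia] at *; tauto)
  | @chdR Φ γ δ φ _ ih =>
      exact tc4 (sdisjInsert (.and (.dia γ φ) (.dia δ φ)) Φ) ih
        (chdEquiv (pariNFG γ) (pariNFG δ) (pariNF φ))
        (sdisjInsert (.dia (.chd γ δ) φ) Φ) (fun v h1 h2 h3 h4 => by
          rw [peval_piff] at h1 h3 h4; rw [peval_pand] at h3
          simp only [pariNF, pariNFG, peval_or, peval_neg, peval_dia] at *; tauto)
  | @testR Φ ψ φ _ ih =>
      exact tc4 (sdisjInsert (.and ψ φ) Φ) ih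
        (HilbP.axTest (ψ := pariNF ψ) (φ := pariNF φ))
        (sdisjInsert (.dia (.test ψ) φ) Φ) (fun v h1 h2 h3 h4 => by
          rw [peval_piff] at h1 h3 h4; rw [peval_pand] at h3
          simp only [pariNF, pariNFG, peval_or, peval_neg, peval_dia] at *; tauto)
  | @dtestR Φ ψ φ _ ih =>
      exact tc4 (sdisjInsert (.or ψ φ) Φ) ih
        (dtestAux (pariNF ψ) (pariNF φ))
        (sdisjInsert (.dia (.dtest ψ) φ) Φ) (fun v h1 h2 h3 h4 => by
          rw [peval_piff] at h1 h3 h4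
          simp only [pariNF, pariNFG, peval_or, peval_neg, peval_dia] at *; tauto)
  | @monGd Φ χ γ c _ ih =>
      have base : GleP (pariNFG γ) (pariNFG (.comp (.dtest χ) γ)) := fun ξ => by
        simp only [pariNFG]
        exact dtestCompGle (pariNF χ) (pariNFG γ) ξ
      have mono := fillGFMono c base
      exact tc4 (sdisjInsert (c.fillG γ) Φ) ih mono
        (sdisjInsert (c.fillG (.comp (.dtest χ) γ)) Φ) (fun v h1 h2 h3 h4 => by
          rw [peval_piff] at h1 h4; rw [peval_pimp] at h3
          simp only [peval_or, peval_neg, peval_dia] at *; tauto)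
  | @monFd Φ χ φ c _ ih =>
      have base : HilbP (pimp (pariNF φ) (pariNF (.dia (.dtest χ) φ))) := by
        simp only [pariNF, pariNFG]
        exact tc1 (dtestAux (pariNF χ) (pariNF φ)) (fun v h1 => by
          rw [peval_piff] at h1; rw [peval_pimp]; simp only [peval_or, peval_neg, peval_dia] at *; tauto)
      have mono := fillFMono c base
      exact tc4 (sdisjInsert (c.fill φ) Φ) ih mono
        (sdisjInsert (c.fill (.dia (.dtest χ) φ)) Φ) (fun v h1 h2 h3 h4 => by
          rw [peval_piff] at h1 h4; rw [peval_pimp] at h3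
          simp only [peval_or, peval_neg, peval_dia] at *; tauto)
  | @compd Φ γ δ φ c _ ih =>
      have base : HilbP (pimp (pariNF (.dia γ (.dia δ φ))) (pariNF (.dia (.comp γ δ) φ))) := by
        simp only [pariNF, pariNFG]
        exact piff_mpr HilbP.axComp
      have mono := fillFMono c base
      exact tc4 (sdisjInsert (c.fill (.dia γ (.dia δ φ))) Φ) ih mono
        (sdisjInsert (c.fill (.dia (.comp γ δ) φ)) Φ) (fun v h1 h2 h3 h4 => by
          rw [peval_piff] at h1 h4; rw [peval_pimp] at h3
          simp only [peval_or, peval_neg, peval_dia] at *; tauto)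
  | @inds Φ γ φ _ ih =>
      have hXS := seqComplEquiv Φ
      have hIns1 := sdisjInsert (.and φ (.dia γ (.dia (.cross (.comp (.dtest (seqCompl Φ)) γ))
        (.dia (.dtest (seqCompl Φ)) φ)))) Φ
      have cu := crossUnfold (ParGame.comp (ParGame.dual (.test (.neg (pariNF (seqCompl Φ))))) (pariNFG γ)) (ParForm.dia (ParGame.dual (.test (.neg (pariNF (seqCompl Φ))))) (pariNF φ))
      have ac : HilbP (piff (ParForm.dia (ParGame.comp (ParGame.dual (.test (.neg (pariNF (seqCompl Φ))))) (pariNFG γ)) (ParForm.dia (.dual (.star (.dual (ParGame.comp (ParGame.dual (.test (.neg (pariNF (seqCompl Φ))))) (pariNFG γ))))) (ParForm.dia (ParGame.dual (.test (.neg (pariNF (seqCompl Φ))))) (pariNF φ))))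
          (ParForm.dia (ParGame.dual (.test (.neg (pariNF (seqCompl Φ))))) (.dia (pariNFG γ) (ParForm.dia (.dual (.star (.dual (ParGame.comp (ParGame.dual (.test (.neg (pariNF (seqCompl Φ))))) (pariNFG γ))))) (ParForm.dia (ParGame.dual (.test (.neg (pariNF (seqCompl Φ))))) (pariNF φ)))))) := HilbP.axComp
      have d1 := dtestAux (pariNF (seqCompl Φ)) (.dia (pariNFG γ) (ParForm.dia (.dual (.star (.dual (ParGame.comp (ParGame.dual (.test (.neg (pariNF (seqCompl Φ))))) (pariNFG γ))))) (ParForm.dia (ParGame.dual (.test (.neg (pariNF (seqCompl Φ))))) (pariNF φ))))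
      have d2 := dtestAux (pariNF (seqCompl Φ)) (pariNF φ)
      have hDun : HilbP (piff (ParForm.dia (.dual (.star (.dual (ParGame.comp (ParGame.dual (.test (.neg (pariNF (seqCompl Φ))))) (pariNFG γ))))) (ParForm.dia (ParGame.dual (.test (.neg (pariNF (seqCompl Φ))))) (pariNF φ))) (pand (.or (pariNF (seqCompl Φ)) (pariNF φ)) (.or (pariNF (seqCompl Φ)) (.dia (pariNFG γ) (ParForm.dia (.dual (.star (.dual (ParGame.comp (ParGame.dual (.test (.neg (pariNF (seqCompl Φ))))) (pariNFG γ))))) (ParForm.dia (ParGame.dual (.test (.neg (pariNF (seqCompl Φ))))) (pariNF φ))))))) :=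
        tc4 cu ac d1 d2 (fun v h1 h2 h3 h4 => by
          rw [peval_piff] at h1 h2 h3 h4 ⊢
          rw [peval_pand] at h1 ⊢
          simp only [peval_or, peval_neg, peval_dia] at h1 h2 h3 h4 ⊢; tauto)
      have hXD : HilbP (pimp (pariNF (seqCompl Φ)) (pand (pariNF φ) (.dia (pariNFG γ) (ParForm.dia (.dual (.star (.dual (ParGame.comp (ParGame.dual (.test (.neg (pariNF (seqCompl Φ))))) (pariNFG γ))))) (ParForm.dia (ParGame.dual (.test (.neg (pariNF (seqCompl Φ))))) (pariNF φ)))))) :=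
        tc3 hIns1 ih hXS (fun v h1 h2 h3 => by
          rw [peval_piff] at h1 h3; rw [peval_pimp, peval_pand]
          simp only [pariNF, pariNFG, peval_or, peval_neg, peval_dia] at h1 h3 ⊢; tauto)
      have m : HilbP (pimp (ParForm.dia (pariNFG γ) (ParForm.dia (.dual (.star (.dual (ParGame.comp (ParGame.dual (.test (.neg (pariNF (seqCompl Φ))))) (pariNFG γ))))) (ParForm.dia (ParGame.dual (.test (.neg (pariNF (seqCompl Φ))))) (pariNF φ)))) (.dia (pariNFG γ) (ParForm.or (pariNF (seqCompl Φ)) (ParForm.dia (.dual (.star (.dual (ParGame.comp (ParGame.dual (.test (.neg (pariNF (seqCompl Φ))))) (pariNFG γ))))) (ParForm.dia (ParGame.dual (.test (.neg (pariNF (seqCompl Φ))))) (pariNF φ)))))) :=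
        HilbP.mon _ (HilbP.taut (fun v => by
          rw [peval_pimp]; simp only [peval_or, peval_neg, peval_dia]; tauto))
      have hRho : HilbP (pimp (ParForm.or (pariNF (seqCompl Φ)) (ParForm.dia (.dual (.star (.dual (ParGame.comp (ParGame.dual (.test (.neg (pariNF (seqCompl Φ))))) (pariNFG γ))))) (ParForm.dia (ParGame.dual (.test (.neg (pariNF (seqCompl Φ))))) (pariNF φ)))) (.dia (pariNFG γ) (ParForm.or (pariNF (seqCompl Φ)) (ParForm.dia (.dual (.star (.dual (ParGame.comp (ParGame.dual (.test (.neg (pariNF (seqCompl Φ))))) (pariNFG γ))))) (ParForm.dia (ParGame.dual (.test (.neg (pariNF (seqCompl Φ))))) (pariNF φ)))))) :=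
        tc3 hXD hDun m (fun v h1 h2 h3 => by
          rw [peval_pimp] at h1 h3 ⊢; rw [peval_pand] at h1; rw [peval_piff] at h2
          rw [peval_pand] at h2
          simp only [peval_or, peval_neg, peval_dia] at h1 h2 h3 ⊢; tauto)
      have hStep : HilbP (pimp (ParForm.dia (.dual (pariNFG γ)) (.neg (ParForm.or (pariNF (seqCompl Φ)) (ParForm.dia (.dual (.star (.dual (ParGame.comp (ParGame.dual (.test (.neg (pariNF (seqCompl Φ))))) (pariNFG γ))))) (ParForm.dia (ParGame.dual (.test (.neg (pariNF (seqCompl Φ))))) (pariNF φ)))))) (.neg (ParForm.or (pariNF (seqCompl Φ)) (ParForm.dia (.dual (.star (.dual (ParGame.comp (ParGame.dual (.test (.neg (pariNF (seqCompl Φ))))) (pariNFG γ))))) (ParForm.dia (ParGame.dual (.test (.neg (pariNF (seqCompl Φ))))) (pariNF φ)))))) :=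
        tc3 hRho (HilbP.axDual (γ := (pariNFG γ)) (φ := .neg (ParForm.or (pariNF (seqCompl Φ)) (ParForm.dia (.dual (.star (.dual (ParGame.comp (ParGame.dual (.test (.neg (pariNF (seqCompl Φ))))) (pariNFG γ))))) (ParForm.dia (ParGame.dual (.test (.neg (pariNF (seqCompl Φ))))) (pariNF φ)))))) (diaDN (pariNFG γ) (ParForm.or (pariNF (seqCompl Φ)) (ParForm.dia (.dual (.star (.dual (ParGame.comp (ParGame.dual (.test (.neg (pariNF (seqCompl Φ))))) (pariNFG γ))))) (ParForm.dia (ParGame.dual (.test (.neg (pariNF (seqCompl Φ))))) (pariNF φ)))))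
          (fun v h1 h2 h3 => by
            rw [peval_pimp] at h1 ⊢; rw [peval_piff] at h2 h3
            simp only [peval_or, peval_neg, peval_dia] at h1 h2 h3 ⊢; tauto)
      have hBar := HilbP.barInd hStep
      have hRhoPhi : HilbP (pimp (ParForm.or (pariNF (seqCompl Φ)) (ParForm.dia (.dual (.star (.dual (ParGame.comp (ParGame.dual (.test (.neg (pariNF (seqCompl Φ))))) (pariNFG γ))))) (ParForm.dia (ParGame.dual (.test (.neg (pariNF (seqCompl Φ))))) (pariNF φ)))) (pariNF φ)) :=
        tc2 hXD hDun (fun v h1 h2 => by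
          rw [peval_pimp] at h1 ⊢; rw [peval_pand] at h1; rw [peval_piff] at h2
          rw [peval_pand] at h2
          simp only [peval_or, peval_neg, peval_dia] at h1 h2 ⊢; tauto)
      have hMon := HilbP.mon (ParGame.star (.dual (pariNFG γ))) (negMonoP hRhoPhi)
      exact tc5 (sdisjInsert (.dia (.cross γ) φ) Φ) hBar hMon
        (HilbP.axDual (γ := ParGame.star (.dual (pariNFG γ))) (φ := (pariNF φ))) hXS
        (fun v h1 h2 h3 h4 h5 => by
          rw [peval_piff] at h1 h4 h5; rw [peval_pimp] at h2 h3
          simp only [pariNF, pariNFG, peval_or, peval_neg, peval_dia] at h1 h2 h3 h4 h5 ⊢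
          tauto)

/-- For every `ξ ∈ L_NF`, if `G ⊢ ξ` then `HilbP ⊢ pari(ξ)`, where
    `pari` replaces demonic operations by duals of angelic ones. -/
theorem G_to_HilbP_pari (ξ : GLForm) :
    GDer {ξ} → HilbP (pariNF ξ) := by
  intro h
  exact tc2 (GDer_sound h) (sdisjSingle ξ) (fun v h1 h2 => by
    rw [peval_piff] at h2; tauto)
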